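/- For all positive integers m, n and every BQAP1 instance (q, c, d), there exists a feasible solution (σ,τ) with f1(σ,τ) ≤ A1(q,c,d). -/

import Mathlib

/-- Objective function of BQAP1. -/
noncomputable def f1 {m n : ℕ} (q : Fin m → Fin n → Fin m → Fin n → ℝ)
    (c d : Fin m → Fin n → ℝ) (σ : Fin m → Fin n) (τ : Fin n → Fin m) : ℝ :=
  (∑ i, ∑ l, q i (σ i) (τ l) l) + (∑ i, c i (σ i)) + (∑ l, d (τ l) l)

/-- Average objective value of BQAP1. -/
noncomputable def A1 {m n : ℕ} (q : Fin m → Fin n → Fin m → Fin n → ℝ)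
    (c d : Fin m → Fin n → ℝ) : ℝ :=
  (1 / ((m : ℝ) * n)) * (∑ i, ∑ j, ∑ k, ∑ l, q i j k l)
    + (1 / (n : ℝ)) * (∑ i, ∑ j, c i j)
    + (1 / (m : ℝ)) * (∑ i, ∑ j, d i j)

lemma sum_eval {α β : Type*} [Fintype α] [DecidableEq α] [Fintype β] (a : α) (G : β → ℝ) :
    ∑ f : α → β, G (f a) = (Fintype.card β ^ (Fintype.card α - 1) : ℕ) * ∑ b, G b := by
  rw [← Equiv.sum_comp (Equiv.funSplitAt a β).symm (fun f => G (f a))]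
  simp [Fintype.sum_prod_type, Finset.sum_const, Fintype.card_fun, mul_comm, ← Finset.sum_mul]

theorem exists_no_worse_than_average_BQAP1 (m n : ℕ) (hm : 0 < m) (hn : 0 < n)
    (q : Fin m → Fin n → Fin m → Fin n → ℝ) (c d : Fin m → Fin n → ℝ) :
    ∃ (σ : Fin m → Fin n) (τ : Fin n → Fin m),
      f1 q c d σ τ ≤ A1 q c d := by
  have key : ∑ p : (Fin m → Fin n) × (Fin n → Fin m), f1 q c d p.1 p.2
      = (Fintype.card ((Fin m → Fin n) × (Fin n → Fin m)) : ℝ) * A1 q c d := by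
    have hq : ∀ (i : Fin m) (l : Fin n),
        ∑ σ : Fin m → Fin n, ∑ τ : Fin n → Fin m, q i (σ i) (τ l) l
          = ((n : ℝ) ^ (m - 1)) * ((m : ℝ) ^ (n - 1)) * ∑ j, ∑ k, q i j k l := by
      intro i l
      rw [sum_eval i (fun j => ∑ τ : Fin n → Fin m, q i j (τ l) l)]
      simp only [fun j : Fin n => sum_eval l (fun k => q i j k l)]
      push_cast
      rw [Finset.mul_sum]
      ring_nf
      simp [Finset.mul_sum, mul_comm, mul_assoc, mul_left_comm]
    have hc : ∑ σ : Fin m → Fin n, ∑ i, c i (σ i)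
        = ((n : ℝ) ^ (m - 1)) * ∑ i, ∑ j, c i j := by
      rw [Finset.sum_comm]
      simp only [fun i : Fin m => sum_eval i (fun j => c i j), Fintype.card_fin]
      push_cast
      rw [Finset.mul_sum]
    have hd : ∑ τ : Fin n → Fin m, ∑ l, d (τ l) l
        = ((m : ℝ) ^ (n - 1)) * ∑ k, ∑ l, d k l := by
      rw [Finset.sum_comm]
      simp only [fun l : Fin n => sum_eval l (fun k => d k l), Fintype.card_fin]
      push_cast
      simp only [Finset.mul_sum]
      rw [Finset.sum_comm]
    have hQ : ∑ σ : Fin m → Fin n, ∑ τ : Fin n → Fin m, ∑ i, ∑ l, q i (σ i) (τ l) l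
        = ((n : ℝ) ^ (m - 1)) * ((m : ℝ) ^ (n - 1)) * ∑ i, ∑ j, ∑ k, ∑ l, q i j k l := by
      have step : ∑ σ : Fin m → Fin n, ∑ τ : Fin n → Fin m, ∑ i, ∑ l, q i (σ i) (τ l) l
          = ∑ i, ∑ l, ∑ σ : Fin m → Fin n, ∑ τ : Fin n → Fin m, q i (σ i) (τ l) l := by
        calc ∑ σ : Fin m → Fin n, ∑ τ : Fin n → Fin m, ∑ i, ∑ l, q i (σ i) (τ l) l
            = ∑ σ : Fin m → Fin n, ∑ i, ∑ τ : Fin n → Fin m, ∑ l, q i (σ i) (τ l) l :=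
              Finset.sum_congr rfl fun σ _ => Finset.sum_comm
          _ = ∑ i, ∑ σ : Fin m → Fin n, ∑ τ : Fin n → Fin m, ∑ l, q i (σ i) (τ l) l :=
              Finset.sum_comm
          _ = ∑ i, ∑ σ : Fin m → Fin n, ∑ l, ∑ τ : Fin n → Fin m, q i (σ i) (τ l) l :=
              Finset.sum_congr rfl fun i _ => Finset.sum_congr rfl fun σ _ => Finset.sum_comm
          _ = ∑ i, ∑ l, ∑ σ : Fin m → Fin n, ∑ τ : Fin n → Fin m, q i (σ i) (τ l) l :=
              Finset.sum_congr rfl fun i _ => Finset.sum_comm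
      rw [step]
      simp only [hq, ← Finset.mul_sum]
      congr 1
      refine Finset.sum_congr rfl fun i _ => ?_
      calc ∑ l : Fin n, ∑ j : Fin n, ∑ k : Fin m, q i j k l
          = ∑ j : Fin n, ∑ l : Fin n, ∑ k : Fin m, q i j k l := Finset.sum_comm
        _ = ∑ j : Fin n, ∑ k : Fin m, ∑ l : Fin n, q i j k l :=
            Finset.sum_congr rfl fun j _ => Finset.sum_comm
    have h2 : ∑ σ : Fin m → Fin n, ∑ _τ : Fin n → Fin m, ∑ i, c i (σ i)
        = (m : ℝ) ^ n * ((n : ℝ) ^ (m - 1) * ∑ i, ∑ j, c i j) := by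
      simp only [Finset.sum_const, Finset.card_univ, nsmul_eq_mul, Fintype.card_fun,
        Fintype.card_fin]
      rw [← Finset.mul_sum, hc]
      push_cast
      ring
    have h3 : ∑ _σ : Fin m → Fin n, ∑ τ : Fin n → Fin m, ∑ l, d (τ l) l
        = (n : ℝ) ^ m * ((m : ℝ) ^ (n - 1) * ∑ k, ∑ l, d k l) := by
      rw [hd]
      simp only [Finset.sum_const, Finset.card_univ, nsmul_eq_mul, Fintype.card_fun,
        Fintype.card_fin]
      push_cast
      ring
    rw [Fintype.sum_prod_type]
    simp only [f1, Finset.sum_add_distrib]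
    rw [hQ, h2, h3]
    simp only [Fintype.card_prod, Fintype.card_fun, Fintype.card_fin, A1]
    have e1 : ((n : ℝ)) ^ m = (n : ℝ) ^ (m - 1) * n := by
      rw [← pow_succ, Nat.sub_add_cancel hm]
    have e2 : ((m : ℝ)) ^ n = (m : ℝ) ^ (n - 1) * m := by
      rw [← pow_succ, Nat.sub_add_cancel hn]
    push_cast
    rw [e1, e2]
    have hm' : (m : ℝ) ≠ 0 := Nat.cast_ne_zero.mpr hm.ne'
    have hn' : (n : ℝ) ≠ 0 := Nat.cast_ne_zero.mpr hn.ne'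
    field_simp
  haveI : NeZero m := ⟨hm.ne'⟩
  haveI : NeZero n := ⟨hn.ne'⟩
  have hne : (Finset.univ : Finset ((Fin m → Fin n) × (Fin n → Fin m))).Nonempty :=
    Finset.univ_nonempty
  have hle : ∑ p : (Fin m → Fin n) × (Fin n → Fin m), f1 q c d p.1 p.2
      ≤ ∑ _p : (Fin m → Fin n) × (Fin n → Fin m), A1 q c d := by
    rw [key]
    simp [Finset.sum_const, nsmul_eq_mul]
  obtain ⟨p, -, hp⟩ := Finset.exists_le_of_sum_le hne hle
  exact ⟨p.1, p.2, hp⟩
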